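/- For any prime q and natural number a ≥ 1, there exists a natural number n ≥ 1 such that S_n(q^a) is not congruent to S_n(q^(a+1)) modulo q^a. In particular, this holds for n = q - 1 when q is odd, and n = 1 when q = 2. -/

import Mathlib

open Finset

def S (n m : ℕ) : ℕ := ∑ i ∈ Finset.Icc 1 m, i ^ n

lemma add_pow_sq_zero {R : Type*} [CommRing R] {c : R} (hc : c ^ 2 = 0) (i : R) :
    ∀ n : ℕ, (c + i) ^ n = i ^ n + n * c * i ^ (n - 1)
  | 0 => by simp
  | 1 => by simp; ring
  | (n + 2) => by
    rw [pow_succ, add_pow_sq_zero hc i (n + 1)]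
    simp only [Nat.add_sub_cancel]
    push_cast
    linear_combination (↑n + 1) * i ^ n * hc

lemma cast_S_mul {N : ℕ} {m : ℕ} (hm : ((m : ZMod N)) ^ 2 = 0) (n : ℕ) (hn : 1 ≤ n) :
    ∀ r : ℕ, ((S n (r * m) : ℕ) : ZMod N) =
      r * S n m + n * m * (∑ k ∈ range r, (k : ZMod N)) * S (n - 1) m
  | 0 => by simp [S]
  | (r + 1) => by
    have hsplit : S n ((r + 1) * m) = S n (r * m) + ∑ i ∈ Ioc 0 m, (r * m + i) ^ n := by
      unfold S
      simp only [show ∀ x:ℕ, Icc 1 x = Ioc 0 x from fun _ => rfl]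
      rw [show (r + 1) * m = r * m + m by ring,
        ← Finset.sum_Ioc_consecutive _ (Nat.zero_le (r * m)) (Nat.le_add_right _ m)]
      congr 1
      have hmap := Finset.map_add_left_Ioc 0 m (r * m)
      rw [add_zero] at hmap
      rw [← hmap, Finset.sum_map]
      simp [addLeftEmbedding_apply]
    rw [hsplit]
    push_cast
    rw [cast_S_mul hm n hn r]
    have hterm : ∀ i : ℕ, ((r : ZMod N) * m + i) ^ n
        = (i : ZMod N) ^ n + n * ((r : ZMod N) * m) * i ^ (n - 1) := by
      intro i
      exact add_pow_sq_zero (by rw [mul_pow, hm, mul_zero]) _ n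
    simp only [hterm]
    rw [Finset.sum_add_distrib, ← Finset.mul_sum, Finset.sum_range_succ]
    have h1 : (∑ i ∈ Ioc 0 m, (i : ZMod N) ^ n) = ((S n m : ℕ) : ZMod N) := by
      unfold S; simp only [show ∀ x:ℕ, Icc 1 x = Ioc 0 x from fun _ => rfl]; push_cast; ring
    have h2 : (∑ i ∈ Ioc 0 m, (i : ZMod N) ^ (n - 1)) = ((S (n-1) m : ℕ) : ZMod N) := by
      unfold S; simp only [show ∀ x:ℕ, Icc 1 x = Ioc 0 x from fun _ => rfl]; push_cast; ring
    rw [h1, h2]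
    ring

lemma S_mul_modEq {n : ℕ} (hn : 1 ≤ n) (r m : ℕ) : S n (r * m) ≡ r * S n m [MOD m] := by
  rw [← ZMod.natCast_eq_natCast_iff]
  have hm : ((m : ZMod m)) ^ 2 = 0 := by rw [ZMod.natCast_self]; ring
  rw [cast_S_mul hm n hn r, ZMod.natCast_self]
  push_cast
  ring

lemma S_modEq_q {q : ℕ} (hq : q.Prime) (hq2 : q ≠ 2) {a : ℕ} (ha : 1 ≤ a) {n : ℕ}
    (hn : 1 ≤ n) : S n (q ^ (a + 1)) ≡ q * S n (q ^ a) [MOD q ^ (a + 1)] := by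
  rw [pow_succ' q a, ← ZMod.natCast_eq_natCast_iff]
  have hm : ((q ^ a : ℕ) : ZMod (q * q ^ a)) ^ 2 = 0 := by
    have h : ((q ^ a : ℕ) : ZMod (q * q ^ a)) ^ 2 = ((q ^ a * q ^ a : ℕ) : ZMod (q * q ^ a)) := by
      push_cast; ring
    rw [h, ZMod.natCast_eq_zero_iff, ← pow_add, ← pow_succ' q a]
    exact pow_dvd_pow q (by omega)
  rw [cast_S_mul hm n hn q]
  have hzero : ((q ^ a : ℕ) : ZMod (q * q ^ a)) * (∑ k ∈ Finset.range q, (k : ZMod (q * q ^ a))) = 0 := by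
    have hcast : ((q ^ a : ℕ) : ZMod (q * q ^ a)) * (∑ k ∈ Finset.range q, (k : ZMod (q * q ^ a)))
        = ((q ^ a * ∑ k ∈ Finset.range q, k : ℕ) : ZMod (q * q ^ a)) := by push_cast; ring
    rw [hcast, ZMod.natCast_eq_zero_iff]
    have hodd : 2 ∣ q - 1 := by
      have h2 := hq.two_le
      obtain ⟨k, hk⟩ := hq.odd_of_ne_two hq2
      omega
    obtain ⟨t, ht⟩ := hodd
    have hsum : (∑ k ∈ Finset.range q, k) = q * t := by
      have h2 := Finset.sum_range_id_mul_two q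
      have := hq.two_le
      nlinarith [h2]
    rw [hsum]
    exact ⟨t, by ring⟩
  push_cast at hzero ⊢
  rw [show (n : ZMod (q * q ^ a)) * (q:ZMod (q * q^a)) ^ a * (∑ k ∈ Finset.range q, (k : ZMod (q * q ^ a))) * (S (n-1) (q^a) : ℕ)
      = (n : ZMod (q * q ^ a)) * ((q:ZMod (q * q^a)) ^ a * ∑ k ∈ Finset.range q, (k : ZMod (q * q ^ a))) * (S (n-1) (q^a) : ℕ) by ring, hzero]
  ring

lemma S_base {q : ℕ} (hq : q.Prime) : S (q - 1) q ≡ q - 1 [MOD q] := by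
  haveI : Fact q.Prime := ⟨hq⟩
  have h2 := hq.two_le
  have hsplit : S (q - 1) q = S (q - 1) (q - 1) + q ^ (q - 1) := by
    unfold S
    rw [show q = (q - 1) + 1 by omega, Finset.sum_Icc_succ_top (by omega : 1 ≤ q - 1 + 1)]
    congr 2 <;> omega
  rw [← ZMod.natCast_eq_natCast_iff, hsplit]
  push_cast
  rw [ZMod.natCast_self, zero_pow (by omega : q - 1 ≠ 0), add_zero]
  unfold S
  push_cast
  have hterm : ∀ i ∈ Finset.Icc 1 (q - 1), (i : ZMod q) ^ (q - 1) = 1 := by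
    intro i hi
    simp only [Finset.mem_Icc] at hi
    apply ZMod.pow_card_sub_one_eq_one
    intro h0
    rw [ZMod.natCast_eq_zero_iff] at h0
    have := Nat.le_of_dvd (by omega) h0
    omega
  rw [Finset.sum_congr rfl hterm, Finset.sum_const, Nat.card_Icc]
  simp

lemma S_val {q : ℕ} (hq : q.Prime) (hq2 : q ≠ 2) :
    ∀ a : ℕ, 1 ≤ a → S (q - 1) (q ^ a) ≡ q ^ (a - 1) * (q - 1) [MOD q ^ a] := by
  have h2 := hq.two_le
  intro a ha
  induction a with
  | zero => omega
  | succ b ih =>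
    rcases Nat.eq_or_lt_of_le ha with h1 | h1
    · have hb0 : b = 0 := by omega
      subst hb0
      simpa using S_base hq
    · have hb : 1 ≤ b := by omega
      have hstep := S_modEq_q hq hq2 hb (n := q - 1) (by omega)
      have hmul := Nat.ModEq.mul_left' (c := q) (ih hb)
      rw [← pow_succ' q b] at hmul
      refine hstep.trans (hmul.trans ?_)
      rw [show q * (q ^ (b - 1) * (q - 1)) = q * q ^ (b - 1) * (q - 1) by ring,
        ← pow_succ' q (b - 1), show b - 1 + 1 = b + 1 - 1 by omega]

lemma S_two (m : ℕ) : 2 * S 1 m = m * (m + 1) := by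
  induction m with
  | zero => simp [S]
  | succ k ih =>
    have : S 1 (k + 1) = S 1 k + (k + 1) := by
      unfold S
      rw [Finset.sum_Icc_succ_top (by omega : 1 ≤ k + 1)]
      simp
    rw [this, Nat.mul_add, ih]; ring

lemma key_not_dvd {q a : ℕ} (hq : q.Prime) (ha : 1 ≤ a) :
    ¬ q ^ a ∣ S (if q = 2 then 1 else q - 1) (q ^ a) := by
  have h2 := hq.two_le
  by_cases hq2 : q = 2
  · subst hq2
    rw [if_pos rfl]
    rintro ⟨c, hc⟩
    have hg := S_two (2 ^ a)
    rw [hc] at hg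
    have hdvd : 2 ∣ 2 ^ a := dvd_pow_self 2 (by omega)
    have : 2 * c = 2 ^ a + 1 := by
      have hpos : 0 < 2 ^ a := by positivity
      have : 2 ^ a * (2 * c) = 2 ^ a * (2 ^ a + 1) := by rw [← hg]; ring
      exact Nat.eq_of_mul_eq_mul_left hpos this
    omega
  · simp only [if_neg hq2]
    intro hdvd
    have hB := S_val hq hq2 a ha
    have h0 : S (q - 1) (q ^ a) ≡ 0 [MOD q ^ a] := (Nat.modEq_zero_iff_dvd).mpr hdvd
    have : q ^ (a - 1) * (q - 1) ≡ 0 [MOD q ^ a] := hB.symm.trans h0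
    rw [Nat.modEq_zero_iff_dvd, show a = (a - 1) + 1 by omega, pow_succ'] at this
    have hq1 : q ∣ q ^ (a - 1) * (q - 1) → q ^ (a-1) * q ∣ q ^ (a-1) * (q-1) → False := by
      intro _ h
      have := (mul_dvd_mul_iff_left (a := q ^ (a - 1)) (pow_ne_zero _ (by omega))).mp h
      have := Nat.le_of_dvd (by omega) this
      omega
    apply hq1
    · exact dvd_trans ⟨q ^ (a-1), by ring⟩ this
    · have := this; rwa [mul_comm] at this

theorem stmt8 (q a : ℕ) (hq : q.Prime) (ha : 1 ≤ a) :
    (∃ n, 1 ≤ n ∧ ¬ S n (q ^ a) ≡ S n (q ^ (a + 1)) [MOD q ^ a]) ∧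
    ¬ S (if q = 2 then 1 else q - 1) (q ^ a) ≡
      S (if q = 2 then 1 else q - 1) (q ^ (a + 1)) [MOD q ^ a] := by
  have h2 := hq.two_le
  set n := if q = 2 then 1 else q - 1 with hn
  have hn1 : 1 ≤ n := by
    by_cases h : q = 2 <;> simp [hn, h] <;> omega
  have hmain : ¬ S n (q ^ a) ≡ S n (q ^ (a + 1)) [MOD q ^ a] := by
    intro h
    have hrw : S n (q ^ (a + 1)) ≡ q * S n (q ^ a) [MOD q ^ a] := by
      rw [pow_succ' q a]
      exact S_mul_modEq hn1 q (q ^ a)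
    have hqs : S n (q ^ a) ≡ q * S n (q ^ a) [MOD q ^ a] := h.trans hrw
    have hle : S n (q ^ a) ≤ q * S n (q ^ a) := Nat.le_mul_of_pos_left _ (by omega)
    have hdvd : q ^ a ∣ (q - 1) * S n (q ^ a) := by
      have h' := (Nat.modEq_iff_dvd' hle).mp hqs
      rw [Nat.sub_mul, one_mul]
      exact h'
    have hcop : (q ^ a).Coprime (q - 1) := by
      apply Nat.Coprime.pow_left
      have : Nat.Coprime (q - 1 + 1) (q - 1) := by simp [Nat.coprime_self_add_left]
      rwa [show q - 1 + 1 = q by omega] at this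
    exact key_not_dvd hq ha (hcop.dvd_of_dvd_mul_left hdvd)
  exact ⟨⟨n, hn1, hmain⟩, hmain⟩
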